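/- A graph's regularity is determined by its adjacency spectrum: let G be a finite simple graph on n ≥ 1 vertices, let A be its (symmetric, real) adjacency matrix, and let λ₁ denote the largest eigenvalue of A. Then G is regular (i.e., there exists d such that every vertex has degree d) if and only if the sum of the squares of the eigenvalues of A equals n·λ₁; equivalently, trace(A²) = n·λ₁. -/

import Mathlib

open Matrix Finset

private lemma sum_sq_eigenvectorBasis {V : Type} [Fintype V] [DecidableEq V]
    {A : Matrix V V ℝ} (hA : A.IsHermitian) (i : V) :
    ∑ u : V, (hA.eigenvectorBasis i) u ^ 2 = 1 := by
  have h := hA.eigenvectorBasis.orthonormal.1 i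
  have h2 : ‖hA.eigenvectorBasis i‖ ^ 2 = 1 := by rw [h]; norm_num
  rw [EuclideanSpace.norm_eq] at h2
  rw [Real.sq_sqrt (by positivity)] at h2
  simpa [Real.norm_eq_abs, sq_abs] using h2

private lemma rayleigh_le_degree {V : Type} [Fintype V] [DecidableEq V]
    (G : SimpleGraph V) [DecidableRel G.Adj] {d : ℕ} (hreg : G.IsRegularOfDegree d)
    (x : V → ℝ) (hx : ∑ u : V, x u ^ 2 = 1) :
    ∑ u : V, ∑ v : V, (if G.Adj u v then x u * x v else 0) ≤ (d : ℝ) := by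
  have key : ∀ u, ∑ v : V, (if G.Adj u v then (x u ^ 2 : ℝ) else 0) = d * x u ^ 2 := by
    intro u
    rw [← Finset.sum_filter]
    rw [Finset.sum_const]
    have : (Finset.univ.filter (G.Adj u)).card = d := by
      rw [← SimpleGraph.neighborFinset_eq_filter]; exact hreg u
    rw [this]; simp [mul_comm]
  calc ∑ u : V, ∑ v : V, (if G.Adj u v then x u * x v else 0)
      ≤ ∑ u : V, ∑ v : V, (if G.Adj u v then (x u ^ 2 + x v ^ 2) / 2 else 0) := by
        refine Finset.sum_le_sum fun u _ => Finset.sum_le_sum fun v _ => ?_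
        split_ifs
        · nlinarith [sq_nonneg (x u - x v)]
        · exact le_refl _
    _ = (d : ℝ) := by
        have expand : ∀ u v : V, (if G.Adj u v then (x u ^ 2 + x v ^ 2) / 2 else 0)
            = (if G.Adj u v then (x u ^ 2 : ℝ) else 0) / 2
              + (if G.Adj u v then (x v ^ 2 : ℝ) else 0) / 2 := by
          intro u v; split_ifs <;> ring
        simp only [expand, Finset.sum_add_distrib, ← Finset.sum_div]
        have h1 : ∑ u : V, ∑ v : V, (if G.Adj u v then (x u ^ 2 : ℝ) else 0) = d := by
          simp only [key]
          rw [← Finset.mul_sum, hx, mul_one]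
        have h2 : ∑ u : V, ∑ v : V, (if G.Adj u v then (x v ^ 2 : ℝ) else 0) = d := by
          rw [Finset.sum_comm]
          have : ∀ v u : V, (if G.Adj u v then (x v ^ 2 : ℝ) else 0)
              = (if G.Adj v u then (x v ^ 2 : ℝ) else 0) := by
            intro v u; simp [SimpleGraph.adj_comm]
          simp only [this, key]
          rw [← Finset.mul_sum, hx, mul_one]
        rw [h1, h2]; ring
/-- A graph's regularity is determined by its adjacency spectrum: for a graph `G` on
`n ≥ 1` vertices with (Hermitian) adjacency matrix `A` and largest eigenvalue `λ₁`,
`G` is regular iff the sum of the squares of the eigenvalues of `A` equals `n * λ₁`;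
equivalently, `trace (A²) = n * λ₁`. -/
theorem regular_iff_sum_sq_eigenvalues {V : Type} [Fintype V] [DecidableEq V]
    (G : SimpleGraph V) [DecidableRel G.Adj] (n : ℕ) (hn : 1 ≤ n)
    (hcard : Fintype.card V = n) (hA : (G.adjMatrix ℝ).IsHermitian) :
    ((∃ d : ℕ, G.IsRegularOfDegree d) ↔
        (∑ i : V, hA.eigenvalues i ^ 2) = (n : ℝ) * (⨆ i : V, hA.eigenvalues i)) ∧
    ((∃ d : ℕ, G.IsRegularOfDegree d) ↔
        ((G.adjMatrix ℝ) ^ 2).trace = (n : ℝ) * (⨆ i : V, hA.eigenvalues i)) := by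
  classical
  have hne : Nonempty V := Fintype.card_pos_iff.mp (by omega)
  set A : Matrix V V ℝ := G.adjMatrix ℝ with hAdef
  set μ : V → ℝ := hA.eigenvalues with hμdef
  set lam : ℝ := ⨆ i : V, hA.eigenvalues i with hlamdef
  set U : Matrix V V ℝ := (hA.eigenvectorUnitary : Matrix V V ℝ) with hUdef
  set D : Matrix V V ℝ := Matrix.diagonal μ with hDdef
  have hbdd : BddAbove (Set.range μ) := (Set.finite_range μ).bddAbove
  have hle : ∀ i, μ i ≤ lam := fun i => le_ciSup hbdd i
  have hUU : U * star U = 1 := (Matrix.mem_unitaryGroup_iff).mp (hA.eigenvectorUnitary).2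
  have hsUU : star U * U = 1 := (Matrix.mem_unitaryGroup_iff').mp (hA.eigenvectorUnitary).2
  have hofr : (RCLike.ofReal ∘ hA.eigenvalues : V → ℝ) = μ := by funext i; simp [hμdef]
  have hspec : A = U * D * star U := by
    conv_lhs => rw [hA.spectral_theorem]
    rw [hofr, Unitary.conjStarAlgAut_apply]
  -- E1 : trace (A^2) = ∑ μ²
  have hA2 : A ^ 2 = U * (D * D) * star U := by
    rw [pow_two, hspec]
    simp only [Matrix.mul_assoc]
    rw [← Matrix.mul_assoc (star U) U, hsUU, Matrix.one_mul]
  have E1 : (A ^ 2).trace = ∑ i : V, μ i ^ 2 := by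
    rw [hA2, Matrix.trace_mul_comm, ← Matrix.mul_assoc, hsUU, Matrix.one_mul, hDdef,
      Matrix.diagonal_mul_diagonal, Matrix.trace_diagonal]
    simp [sq]
  -- E2 : trace (A^2) = sum of degrees
  have E2 : (A ^ 2).trace = ∑ v : V, (G.degree v : ℝ) := by
    rw [pow_two]
    simp [Matrix.trace, Matrix.diag, hAdef, G.adjMatrix_mul_self_apply_self]
  -- the vector c
  set c : V → ℝ := star U *ᵥ Function.const V (1 : ℝ) with hcdef
  have hUc : U *ᵥ c = Function.const V (1 : ℝ) := by
    rw [hcdef, Matrix.mulVec_mulVec, hUU, Matrix.one_mulVec]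
  have hstar : star U = Uᵀ := by ext i j; simp [Matrix.star_apply]
  have hvm : Function.const V (1 : ℝ) ᵥ* U = c := by
    rw [hcdef, hstar, Matrix.mulVec_transpose]
  have hA1 : A *ᵥ Function.const V (1 : ℝ) = fun v => (G.degree v : ℝ) := by
    funext v
    rw [hAdef, SimpleGraph.adjMatrix_mulVec_const_apply, mul_one]
  -- E4 : ∑ c² = n
  have E4 : ∑ i : V, c i ^ 2 = (n : ℝ) := by
    have h0 : Function.const V (1 : ℝ) ⬝ᵥ (U *ᵥ c) = (Function.const V (1 : ℝ) ᵥ* U) ⬝ᵥ c :=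
      Matrix.dotProduct_mulVec _ _ _
    rw [hvm] at h0
    have this : c ⬝ᵥ c = Function.const V (1 : ℝ) ⬝ᵥ Function.const V (1 : ℝ) := by
      rw [← h0, hUc]
    have h2 : c ⬝ᵥ c = ∑ i : V, c i ^ 2 := by simp [dotProduct, sq]
    have h3 : Function.const V (1 : ℝ) ⬝ᵥ Function.const V (1 : ℝ) = (n : ℝ) := by
      simp [dotProduct, hcard]
    rw [h2, h3] at this
    exact this
  -- E3 : ∑ μ c² = sum of degrees
  have E3 : ∑ i : V, μ i * c i ^ 2 = ∑ v : V, (G.degree v : ℝ) := by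
    have h1 : Function.const V (1 : ℝ) ⬝ᵥ (A *ᵥ Function.const V (1 : ℝ))
        = ∑ v : V, (G.degree v : ℝ) := by
      rw [hA1]; simp [dotProduct]
    have h2 : Function.const V (1 : ℝ) ⬝ᵥ (A *ᵥ Function.const V (1 : ℝ))
        = ∑ i : V, μ i * c i ^ 2 := by
      rw [hspec, ← Matrix.mulVec_mulVec, ← Matrix.mulVec_mulVec, ← hcdef,
        Matrix.dotProduct_mulVec, hvm]
      simp only [dotProduct, hDdef, Matrix.mulVec_diagonal]
      exact Finset.sum_congr rfl fun i _ => by ring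
    rw [← h2, h1]
  -- forward direction
  have forward : (∃ d : ℕ, G.IsRegularOfDegree d) → lam * (n : ℝ) = ∑ v : V, (G.degree v : ℝ) := by
    rintro ⟨d, hreg⟩
    have hS : ∑ v : V, (G.degree v : ℝ) = (n : ℝ) * d := by
      simp [hreg.degree_eq, hcard, mul_comm]
    have hμled : ∀ i, μ i ≤ (d : ℝ) := by
      intro i
      have heq := hA.eigenvalues_eq i
      have hx := sum_sq_eigenvectorBasis hA i
      have hray := rayleigh_le_degree G hreg (fun u => hA.eigenvectorBasis i u) hx
      rw [hμdef, heq]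
      have hsx : star (⇑(hA.eigenvectorBasis i) : V → ℝ) = ⇑(hA.eigenvectorBasis i) := by
        funext u; simp
      rw [hsx, SimpleGraph.dotProduct_mulVec_adjMatrix]
      simpa using hray
    have hlamled : lam ≤ (d : ℝ) := ciSup_le hμled
    have hdlelam : (d : ℝ) ≤ lam := by
      have hsum : ∑ i : V, μ i * c i ^ 2 ≤ ∑ i : V, lam * c i ^ 2 :=
        Finset.sum_le_sum fun i _ => mul_le_mul_of_nonneg_right (hle i) (sq_nonneg _)
      rw [← Finset.mul_sum, E4, E3, hS] at hsum
      have hnpos : (0 : ℝ) < n := by exact_mod_cast hn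
      nlinarith
    have : lam = (d : ℝ) := le_antisymm hlamled hdlelam
    rw [this, hS]; ring
  -- backward direction
  have backward : lam * (n : ℝ) = ∑ v : V, (G.degree v : ℝ) → ∃ d : ℕ, G.IsRegularOfDegree d := by
    intro hS
    have key : ∑ i : V, (lam - μ i) * c i ^ 2 = 0 := by
      have : ∑ i : V, (lam - μ i) * c i ^ 2
          = lam * (∑ i : V, c i ^ 2) - ∑ i : V, μ i * c i ^ 2 := by
        rw [Finset.mul_sum, ← Finset.sum_sub_distrib]
        exact Finset.sum_congr rfl fun i _ => by ring
      rw [this, E4, E3, ← hS]; ring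
    have each : ∀ i ∈ Finset.univ, (lam - μ i) * c i ^ 2 = 0 :=
      (Finset.sum_eq_zero_iff_of_nonneg fun i _ =>
        mul_nonneg (sub_nonneg.mpr (hle i)) (sq_nonneg _)).mp key
    have hDc : D *ᵥ c = lam • c := by
      funext i
      rw [hDdef, Matrix.mulVec_diagonal]
      have := each i (Finset.mem_univ i)
      rcases mul_eq_zero.mp this with h | h
      · have : μ i = lam := by linarith [sub_eq_zero.mp h]
        simp [this]
      · have : c i = 0 := by
          have := sq_eq_zero_iff.mp h
          exact this
        simp [this]
    have hAone : A *ᵥ Function.const V (1 : ℝ) = lam • Function.const V (1 : ℝ) := by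
      rw [hspec, ← Matrix.mulVec_mulVec, ← Matrix.mulVec_mulVec, ← hcdef, hDc,
        Matrix.mulVec_smul, hUc]
    have hdeg : ∀ v : V, (G.degree v : ℝ) = lam := by
      intro v
      have := congrFun hAone v
      rw [congrFun hA1 v] at this
      simpa using this
    obtain ⟨v₀⟩ := hne
    refine ⟨G.degree v₀, fun v => ?_⟩
    have : (G.degree v : ℝ) = (G.degree v₀ : ℝ) := by rw [hdeg v, hdeg v₀]
    exact_mod_cast this
  have main : (∃ d : ℕ, G.IsRegularOfDegree d) ↔
      (∑ i : V, μ i ^ 2) = (n : ℝ) * lam := by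
    constructor
    · intro h
      rw [← E1, E2, ← forward h]; ring
    · intro h
      apply backward
      rw [← E2, E1, h]; ring
  refine ⟨main, ?_⟩
  rw [E1]
  exact main
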